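/- If the Hankel matrix of f : Σ* → ℝ has finite rank k, then f is recognizable by a WFA with k states (the converse direction of the Carlyle–Paz/Fliess theorem). -/

import Mathlib

open Matrix

namespace CPaux

variable {σ : Type} [Fintype σ]

/-- Rows of the Hankel matrix. -/
def R (f : List σ → ℝ) (u : List σ) : List σ → ℝ := fun v => f (u ++ v)

/-- Span of the rows. -/
def Hspan (f : List σ → ℝ) : Submodule ℝ (List σ → ℝ) :=
  Submodule.span ℝ (Set.range (R f))

/-- Left shift by a letter, as a linear map. -/
def shiftL (c : σ) : (List σ → ℝ) →ₗ[ℝ] (List σ → ℝ) where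
  toFun g := fun v => g (c :: v)
  map_add' := by intros; rfl
  map_smul' := by intros; rfl

lemma shift_mem (f : List σ → ℝ) (c : σ) {g : List σ → ℝ} (hg : g ∈ Hspan f) :
    shiftL c g ∈ Hspan f := by
  induction hg using Submodule.span_induction with
  | mem x hx =>
    obtain ⟨u, rfl⟩ := hx
    have : shiftL c (R f u) = R f (u ++ [c]) := by
      funext v
      simp [shiftL, R, List.append_assoc]
    rw [this]
    exact Submodule.subset_span ⟨u ++ [c], rfl⟩
  | zero => simp only [map_zero]; exact (Hspan f).zero_mem
  | add x y _ _ hx hy => rw [map_add]; exact (Hspan f).add_mem hx hy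
  | smul a x _ hx => rw [_root_.map_smul]; exact (Hspan f).smul_mem a hx

/-- Shift restricted to the span. -/
noncomputable def shiftV (f : List σ → ℝ) (c : σ) : Hspan f →ₗ[ℝ] Hspan f :=
  (shiftL c).restrict (fun _ hx => shift_mem f c hx)

lemma key (f : List σ → ℝ) {k : ℕ} (b : Module.Basis (Fin k) ℝ (Hspan f)) :
    ∀ (x : List σ) (g : Hspan f),
      (g : List σ → ℝ) x =
        (fun i => b.repr g i) ⬝ᵥ
          ((x.map (fun c => Matrix.of fun i j => b.repr (shiftV f c (b i)) j)).prod).mulVec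
            (fun i => (b i : List σ → ℝ) []) := by
  intro x
  induction x with
  | nil =>
    intro g
    simp only [List.map_nil, List.prod_nil, Matrix.one_mulVec]
    conv_lhs => rw [← b.sum_repr g]
    simp [-Module.Basis.sum_repr, dotProduct, Finset.sum_apply, smul_eq_mul]
  | cons c t ih =>
    intro g
    have hcoe : (g : List σ → ℝ) (c :: t) = ((shiftV f c g : Hspan f) : List σ → ℝ) t := rfl
    rw [hcoe, ih (shiftV f c g)]
    have hg : shiftV f c g = ∑ i, b.repr g i • shiftV f c (b i) := by
      conv_lhs => rw [← b.sum_repr g]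
      simp [-Module.Basis.sum_repr, map_sum, _root_.map_smul]
    have hrepr : (fun j => b.repr (shiftV f c g) j) =
        Matrix.vecMul (fun i => b.repr g i)
          (Matrix.of fun i j => b.repr (shiftV f c (b i)) j) := by
      funext j
      rw [hg]
      simp [Matrix.vecMul, dotProduct, map_sum, Finsupp.coe_finset_sum,
        Finset.sum_apply, smul_eq_mul]
    rw [hrepr, ← Matrix.dotProduct_mulVec, Matrix.mulVec_mulVec]
    simp [List.map_cons, List.prod_cons]

end CPaux

/-- if the Hankel matrix of `f` has finite rank `k` then `f` is
computed by a WFA with `k` states (converse of the Carlyle–Paz/Fliess theorem). -/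
theorem finite_hankel_rank_recognizable {σ : Type} [Fintype σ] (f : List σ → ℝ) (k : ℕ)
    (hrank : Module.rank ℝ (Submodule.span ℝ
      (Set.range (fun u : List σ => fun v : List σ => f (u ++ v)))) = k) :
    ∃ (α0 αinf : Fin k → ℝ) (A : σ → Matrix (Fin k) (Fin k) ℝ),
      ∀ x : List σ, f x = α0 ⬝ᵥ ((x.map A).prod).mulVec αinf := by
  have hspan : CPaux.Hspan f = Submodule.span ℝ
      (Set.range (fun u : List σ => fun v : List σ => f (u ++ v))) := rfl
  have hrank' : Module.rank ℝ (CPaux.Hspan f) = k := by rw [hspan]; exact_mod_cast hrank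
  have hfd : FiniteDimensional ℝ (CPaux.Hspan f) := by
    apply FiniteDimensional.of_rank_eq_nat hrank'
  have hfr : Module.finrank ℝ (CPaux.Hspan f) = k := by
    have := Module.finrank_eq_of_rank_eq hrank'
    exact this
  let b : Module.Basis (Fin k) ℝ (CPaux.Hspan f) := Module.finBasisOfFinrankEq ℝ _ hfr
  have hmem : CPaux.R f [] ∈ CPaux.Hspan f := Submodule.subset_span ⟨[], rfl⟩
  refine ⟨fun i => b.repr ⟨CPaux.R f [], hmem⟩ i, fun i => (b i : List σ → ℝ) [],
    fun c => Matrix.of fun i j => b.repr (CPaux.shiftV f c (b i)) j, fun x => ?_⟩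
  have := CPaux.key f b x ⟨CPaux.R f [], hmem⟩
  simpa [CPaux.R] using this
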